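/- If an analytic equivalence relation E on a Polish space has the Borel witness coding property, then E is Borel graphable by a Borel graph of diameter 2 (any two E-equivalent distinct points are connected by a path of length at most 2). -/

import Mathlib

open MeasureTheory

/-- Partial functions `ℕ →. ℕ` recursive in an oracle `O : ℕ → ℕ`. -/
inductive OracleRecursiveIn (O : ℕ → ℕ) : (ℕ →. ℕ) → Prop
  | oracle : OracleRecursiveIn O O
  | zero : OracleRecursiveIn O (fun _ => 0)
  | succ : OracleRecursiveIn O Nat.succ
  | left : OracleRecursiveIn O (fun n => (Nat.unpair n).1)
  | right : OracleRecursiveIn O (fun n => (Nat.unpair n).2)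
  | pair {f g : ℕ →. ℕ} : OracleRecursiveIn O f → OracleRecursiveIn O g →
      OracleRecursiveIn O (fun n => Nat.pair <$> f n <*> g n)
  | comp {f g : ℕ →. ℕ} : OracleRecursiveIn O f → OracleRecursiveIn O g →
      OracleRecursiveIn O (fun n => g n >>= f)
  | prec {f g : ℕ →. ℕ} : OracleRecursiveIn O f → OracleRecursiveIn O g →
      OracleRecursiveIn O (Nat.unpaired fun a n =>
        n.rec (f a) fun y IH => do let i ← IH; g (Nat.pair a (Nat.pair y i)))
  | rfind {f : ℕ →. ℕ} : OracleRecursiveIn O f →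
      OracleRecursiveIn O (fun a => Nat.rfind fun n => (fun m => m = 0) <$> f (Nat.pair a n))

/-- The characteristic function (with values in `ℕ`) of an element of Cantor space. -/
def toNatFun (x : ℕ → Bool) : ℕ → ℕ := fun n => cond (x n) 1 0

/-- Turing reducibility between elements of Cantor space. -/
def TuringLE (x y : ℕ → Bool) : Prop := OracleRecursiveIn (toNatFun y) (toNatFun x)

/-- An equivalence relation is *Borel graphable* if it is the connectedness relation of a
Borel symmetric irreflexive graph. -/
def BorelGraphable {X : Type*} [MeasurableSpace X] (E : X → X → Prop) : Prop :=
  ∃ G : X → X → Prop, MeasurableSet {p : X × X | G p.1 p.2} ∧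
    Symmetric G ∧ Irreflexive G ∧ ∀ x y, E x y ↔ Relation.ReflTransGen G x y

/-- An *unfolding* of an analytic equivalence relation `E` on `X`: a Borel set
`C ⊆ X² × 2^ℕ` with `(x,x,z) ∈ C` for all `z`, symmetric in the first two coordinates,
projecting onto `E`.  An element `z` with `C x y z` is a *witness* to `x E y`. -/
def Unfolding {X : Type*} [MeasurableSpace X] (E : X → X → Prop)
    (C : X → X → (ℕ → Bool) → Prop) : Prop :=
  MeasurableSet {p : (X × X) × (ℕ → Bool) | C p.1.1 p.1.2 p.2} ∧
  (∀ x z, C x x z) ∧ (∀ x y z, C x y z ↔ C y x z) ∧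
  (∀ x y, E x y ↔ ∃ z, C x y z)

/-- `E` has the *Borel witness coding property* if there is an unfolding `C` of `E` and a
Borel function `f : X → 2^ℕ` such that for all `x` and `a ∈ 2^ℕ` there is `y` with `x E y`
such that `f y` Turing-computes both `a` and a witness to `x E y`. -/
def BorelWitnessCoding {X : Type*} [MeasurableSpace X] (E : X → X → Prop) : Prop :=
  ∃ C : X → X → (ℕ → Bool) → Prop, Unfolding E C ∧
    ∃ f : X → ℕ → Bool, Measurable f ∧
      ∀ (x : X) (a : ℕ → Bool), ∃ y : X, E x y ∧ TuringLE a (f y) ∧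
        ∃ z : ℕ → Bool, C x y z ∧ TuringLE z (f y)

/-- Codes for oracle machines. -/
inductive CodeO : Type
  | oracle : CodeO
  | zero : CodeO
  | succ : CodeO
  | left : CodeO
  | right : CodeO
  | pair : CodeO → CodeO → CodeO
  | comp : CodeO → CodeO → CodeO
  | prec : CodeO → CodeO → CodeO
  | rfind : CodeO → CodeO

namespace CodeO

def enc : CodeO → ℕ
  | oracle => Nat.pair 0 0
  | zero => Nat.pair 1 0
  | succ => Nat.pair 2 0
  | left => Nat.pair 3 0
  | right => Nat.pair 4 0
  | pair a b => Nat.pair 5 (Nat.pair (enc a) (enc b))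
  | comp a b => Nat.pair 6 (Nat.pair (enc a) (enc b))
  | prec a b => Nat.pair 7 (Nat.pair (enc a) (enc b))
  | rfind a => Nat.pair 8 (enc a)

theorem enc_inj : Function.Injective enc := by
  intro c
  induction c with
  | pair a b iha ihb =>
      intro d h; cases d <;> simp [enc, Nat.pair_eq_pair] at h
      obtain ⟨h1, h2⟩ := h; rw [iha h1, ihb h2]
  | comp a b iha ihb =>
      intro d h; cases d <;> simp [enc, Nat.pair_eq_pair] at h
      obtain ⟨h1, h2⟩ := h; rw [iha h1, ihb h2]
  | prec a b iha ihb =>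
      intro d h; cases d <;> simp [enc, Nat.pair_eq_pair] at h
      obtain ⟨h1, h2⟩ := h; rw [iha h1, ihb h2]
  | rfind a iha =>
      intro d h; cases d <;> simp [enc, Nat.pair_eq_pair] at h
      rw [iha h]
  | _ => intro d h; cases d <;> simp [enc, Nat.pair_eq_pair] at h <;> rfl

instance : Countable CodeO := enc_inj.countable

/-- Evaluation of oracle codes. -/
def evalo (O : ℕ → ℕ) : CodeO → ℕ →. ℕ
  | oracle => O
  | zero => fun _ => 0
  | succ => Nat.succ
  | left => fun n => (Nat.unpair n).1
  | right => fun n => (Nat.unpair n).2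
  | pair cf cg => fun n => Nat.pair <$> evalo O cf n <*> evalo O cg n
  | comp cf cg => fun n => evalo O cg n >>= evalo O cf
  | prec cf cg => Nat.unpaired fun a n =>
      n.rec (evalo O cf a) fun y IH => do let i ← IH; evalo O cg (Nat.pair a (Nat.pair y i))
  | rfind cf => fun a => Nat.rfind fun n => (fun m => m = 0) <$> evalo O cf (Nat.pair a n)

theorem evalo_recursiveIn (O : ℕ → ℕ) : ∀ c : CodeO, OracleRecursiveIn O (evalo O c)
  | oracle => OracleRecursiveIn.oracle
  | zero => OracleRecursiveIn.zero
  | succ => OracleRecursiveIn.succ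
  | left => OracleRecursiveIn.left
  | right => OracleRecursiveIn.right
  | pair cf cg => OracleRecursiveIn.pair (evalo_recursiveIn O cf) (evalo_recursiveIn O cg)
  | comp cf cg => OracleRecursiveIn.comp (evalo_recursiveIn O cf) (evalo_recursiveIn O cg)
  | prec cf cg => OracleRecursiveIn.prec (evalo_recursiveIn O cf) (evalo_recursiveIn O cg)
  | rfind cf => OracleRecursiveIn.rfind (evalo_recursiveIn O cf)

theorem exists_code {O : ℕ → ℕ} {F : ℕ →. ℕ} (h : OracleRecursiveIn O F) :
    ∃ c : CodeO, evalo O c = F := by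
  induction h with
  | oracle => exact ⟨oracle, rfl⟩
  | zero => exact ⟨zero, rfl⟩
  | succ => exact ⟨succ, rfl⟩
  | left => exact ⟨left, rfl⟩
  | right => exact ⟨right, rfl⟩
  | pair _ _ ihf ihg =>
      obtain ⟨cf, rfl⟩ := ihf; obtain ⟨cg, rfl⟩ := ihg; exact ⟨pair cf cg, rfl⟩
  | comp _ _ ihf ihg =>
      obtain ⟨cf, rfl⟩ := ihf; obtain ⟨cg, rfl⟩ := ihg; exact ⟨comp cf cg, rfl⟩
  | prec _ _ ihf ihg =>
      obtain ⟨cf, rfl⟩ := ihf; obtain ⟨cg, rfl⟩ := ihg; exact ⟨prec cf cg, rfl⟩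
  | rfind _ ihf =>
      obtain ⟨cf, rfl⟩ := ihf; exact ⟨rfind cf, rfl⟩

end CodeO


namespace CodeO

theorem measurable_mem_evalo (c : CodeO) : ∀ (n v : ℕ),
    MeasurableSet {w : ℕ → ℕ | v ∈ evalo w c n} := by
  induction c with
  | oracle =>
      intro n v
      have : {w : ℕ → ℕ | v ∈ evalo w .oracle n} = (fun w : ℕ → ℕ => w n) ⁻¹' {v} := by
        ext w; simp [evalo, Part.mem_some_iff, eq_comm]
      rw [this]
      exact measurable_pi_apply n (measurableSet_singleton v)
  | zero => intro n v; simp only [evalo]; exact MeasurableSet.const _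
  | succ => intro n v; simp only [evalo]; exact MeasurableSet.const _
  | left => intro n v; simp only [evalo]; exact MeasurableSet.const _
  | right => intro n v; simp only [evalo]; exact MeasurableSet.const _
  | pair cf cg ihf ihg =>
      intro n v
      have : {w : ℕ → ℕ | v ∈ evalo w (.pair cf cg) n} =
          ⋃ a, ⋃ b, ({w | a ∈ evalo w cf n} ∩ {w | b ∈ evalo w cg n}) ∩
            {_w : ℕ → ℕ | Nat.pair a b = v} := by
        ext w
        simp only [evalo, Set.mem_setOf_eq, Set.mem_iUnion, Set.mem_inter_iff, Seq.seq,
          Part.bind_eq_bind, Part.map_eq_map, Part.mem_bind_iff, Part.mem_map_iff]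
        constructor
        · rintro ⟨g, ⟨a, ha, rfl⟩, b, hb, hv⟩
          exact ⟨a, b, ⟨ha, hb⟩, hv⟩
        · rintro ⟨a, b, ⟨ha, hb⟩, hv⟩
          exact ⟨Nat.pair a, ⟨a, ha, rfl⟩, b, hb, hv⟩
      rw [this]
      exact .iUnion fun a => .iUnion fun b => (((ihf n a).inter (ihg n b)).inter (.const _))
  | comp cf cg ihf ihg =>
      intro n v
      have : {w : ℕ → ℕ | v ∈ evalo w (.comp cf cg) n} =
          ⋃ a, {w | a ∈ evalo w cg n} ∩ {w | v ∈ evalo w cf a} := by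
        ext w
        simp only [evalo, Set.mem_setOf_eq, Set.mem_iUnion, Set.mem_inter_iff, Part.bind_eq_bind, Part.mem_bind_iff, exists_prop]
        exact Part.mem_bind_iff
      rw [this]
      exact .iUnion fun a => (ihg n a).inter (ihf a v)
  | prec cf cg ihf ihg =>
      intro n v
      have H : ∀ k v, MeasurableSet {w : ℕ → ℕ | v ∈
          (Nat.rec (motive := fun _ => Part ℕ) (evalo w cf (Nat.unpair n).1)
            (fun y IH => IH.bind fun i =>
              evalo w cg (Nat.pair (Nat.unpair n).1 (Nat.pair y i))) k)} := by
        intro k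
        induction k with
        | zero => intro v; exact ihf _ v
        | succ k ihk =>
            intro v
            have : {w : ℕ → ℕ | v ∈ (Nat.rec (motive := fun _ => Part ℕ)
                (evalo w cf (Nat.unpair n).1) (fun y IH => IH.bind fun i =>
                  evalo w cg (Nat.pair (Nat.unpair n).1 (Nat.pair y i))) (k+1))} =
                ⋃ i, {w : ℕ → ℕ | i ∈ (Nat.rec (motive := fun _ => Part ℕ)
                  (evalo w cf (Nat.unpair n).1) (fun y IH => IH.bind fun i =>
                    evalo w cg (Nat.pair (Nat.unpair n).1 (Nat.pair y i))) k)} ∩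
                  {w | v ∈ evalo w cg (Nat.pair (Nat.unpair n).1 (Nat.pair k i))} := by
              ext w
              simp only [Set.mem_setOf_eq, Set.mem_iUnion, Set.mem_inter_iff, Part.mem_bind_iff, exists_prop]
            rw [this]
            exact .iUnion fun i => (ihk i).inter (ihg _ v)
      have : {w : ℕ → ℕ | v ∈ evalo w (.prec cf cg) n} =
          {w : ℕ → ℕ | v ∈ (Nat.rec (motive := fun _ => Part ℕ) (evalo w cf (Nat.unpair n).1)
            (fun y IH => IH.bind fun i =>
              evalo w cg (Nat.pair (Nat.unpair n).1 (Nat.pair y i))) (Nat.unpair n).2)} := by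
        ext w
        simp only [evalo, Nat.unpaired, Set.mem_setOf_eq, Part.bind_eq_bind]
      rw [this]
      exact H _ v
  | rfind cf ihf =>
      intro n v
      have : {w : ℕ → ℕ | v ∈ evalo w (.rfind cf) n} =
          {w | (0:ℕ) ∈ evalo w cf (Nat.pair n v)} ∩
            ⋂ m, ⋂ (_ : m < v), ⋃ u, {w | u ∈ evalo w cf (Nat.pair n m)} ∩
              {_w : ℕ → ℕ | u ≠ 0} := by
        ext w
        change v ∈ Nat.rfind (fun k => Part.map (fun m => decide (m = 0))
          (evalo w cf (Nat.pair n k))) ↔ _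
        refine Nat.mem_rfind.trans ?_
        simp only [Set.mem_setOf_eq, Set.mem_inter_iff, Set.mem_iInter, Set.mem_iUnion,
          Part.map_eq_map, Part.mem_map_iff, exists_prop]
        constructor
        · rintro ⟨h1, h2⟩
          obtain ⟨u, hu, hu0⟩ := h1
          refine ⟨by simpa [decide_eq_true_eq] using (by rw [of_decide_eq_true hu0] at hu; exact hu), ?_⟩
          intro m hm
          obtain ⟨u', hu', hu'0⟩ := h2 hm
          exact ⟨u', hu', of_decide_eq_false hu'0⟩
        · rintro ⟨h1, h2⟩
          refine ⟨⟨0, h1, by simp⟩, ?_⟩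
          intro m hm
          obtain ⟨u, hu, hu0⟩ := h2 m hm
          exact ⟨u, hu, by simpa using hu0⟩
      rw [this]
      exact (ihf _ 0).inter (.iInter fun m => .iInter fun _ => .iUnion fun u =>
        (ihf _ u).inter (.const _))

end CodeO


theorem OracleRecursiveIn.of_eq {O : ℕ → ℕ} {f g : ℕ →. ℕ} (hf : OracleRecursiveIn O f)
    (H : ∀ n, f n = g n) : OracleRecursiveIn O g :=
  (funext H : f = g) ▸ hf

theorem recursiveIn_of_partrec {f : ℕ →. ℕ} (h : Nat.Partrec f) (O : ℕ → ℕ) :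
    OracleRecursiveIn O f := by
  induction h with
  | zero => exact OracleRecursiveIn.zero
  | succ => exact OracleRecursiveIn.succ
  | left => exact OracleRecursiveIn.left
  | right => exact OracleRecursiveIn.right
  | pair _ _ pf pg => exact OracleRecursiveIn.pair pf pg
  | comp _ _ pf pg => exact OracleRecursiveIn.comp pf pg
  | prec _ _ pf pg => exact OracleRecursiveIn.prec pf pg
  | rfind _ pf => exact OracleRecursiveIn.rfind pf

namespace CodeO

noncomputable def zOf (c : CodeO) (w : ℕ → ℕ) : ℕ → Bool :=
  fun n => @decide ((1:ℕ) ∈ evalo w c n) (Classical.propDecidable _)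

def Tot (c : CodeO) (w : ℕ → ℕ) : Prop :=
  ∀ n, (1:ℕ) ∈ evalo w c n ∨ (0:ℕ) ∈ evalo w c n

theorem zOf_spec {c : CodeO} {w : ℕ → ℕ} {z : ℕ → Bool}
    (h : evalo w c = ↑(toNatFun z)) : zOf c w = z := by
  funext n
  have : evalo w c n = Part.some (toNatFun z n) := by rw [h]; exact (PFun.coe_val _ _)
  unfold zOf
  rw [this]
  cases hz : z n <;> simp [toNatFun, hz, Part.mem_some_iff]

theorem tot_of_eq {c : CodeO} {w : ℕ → ℕ} {z : ℕ → Bool}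
    (h : evalo w c = ↑(toNatFun z)) : Tot c w := by
  intro n
  have : evalo w c n = Part.some (toNatFun z n) := by rw [h]; exact (PFun.coe_val _ _)
  rw [this]
  cases hz : z n <;> simp [toNatFun, hz, Part.mem_some_iff]

theorem eq_of_tot {c : CodeO} {w : ℕ → ℕ} (h : Tot c w) :
    evalo w c = ↑(toNatFun (zOf c w)) := by
  funext n
  rw [PFun.coe_val]
  rcases h n with h1 | h0
  · have : zOf c w n = true := by unfold zOf; simp [h1]
    rw [Part.eq_some_iff.2 h1]
    simp [toNatFun, this]
  · have hne : ¬ (1:ℕ) ∈ evalo w c n := by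
      intro h1
      have := Part.mem_unique h1 h0
      simp at this
    have : zOf c w n = false := by unfold zOf; simp [hne]
    rw [Part.eq_some_iff.2 h0]
    simp [toNatFun, this]

theorem turingLE_iff {z y : ℕ → Bool} :
    TuringLE z y ↔ ∃ c : CodeO, evalo (toNatFun y) c = ↑(toNatFun z) := by
  constructor
  · exact fun h => exists_code h
  · rintro ⟨c, hc⟩
    have := evalo_recursiveIn (toNatFun y) c
    rwa [hc] at this

theorem measurable_zOf (c : CodeO) : Measurable (zOf c) := by
  apply measurable_pi_lambda
  intro n
  apply measurable_to_countable'
  intro b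
  cases b
  · have : (fun w => zOf c w n) ⁻¹' {false} = {w : ℕ → ℕ | (1:ℕ) ∈ evalo w c n}ᶜ := by
      ext w; simp [zOf]
    rw [this]
    exact (measurable_mem_evalo c n 1).compl
  · have : (fun w => zOf c w n) ⁻¹' {true} = {w : ℕ → ℕ | (1:ℕ) ∈ evalo w c n} := by
      ext w; simp [zOf]
    rw [this]
    exact measurable_mem_evalo c n 1

theorem measurableSet_tot (c : CodeO) : MeasurableSet {w : ℕ → ℕ | Tot c w} := by
  have : {w : ℕ → ℕ | Tot c w} =
      ⋂ n, ({w : ℕ → ℕ | (1:ℕ) ∈ evalo w c n} ∪ {w : ℕ → ℕ | (0:ℕ) ∈ evalo w c n}) := by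
    ext w; simp [Tot]
  rw [this]
  exact .iInter fun n => (measurable_mem_evalo c n 1).union (measurable_mem_evalo c n 0)

end CodeO


/-- Interleaving (recursive join) of two elements of Cantor space. -/
def joinB (x y : ℕ → Bool) : ℕ → Bool :=
  fun n => if n % 2 = 0 then x (n / 2) else y (n / 2)

theorem joinB_even (x y : ℕ → Bool) (n : ℕ) : joinB x y (2 * n) = x n := by
  simp [joinB, Nat.mul_div_cancel_left _ (by norm_num : (0:ℕ) < 2), Nat.mul_mod_right]

theorem joinB_odd (x y : ℕ → Bool) (n : ℕ) : joinB x y (2 * n + 1) = y n := by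
  have h1 : (2 * n + 1) % 2 = 1 := by omega
  have h2 : (2 * n + 1) / 2 = n := by omega
  simp [joinB, h1, h2]

theorem turingLE_of_comp {x : ℕ → Bool} {w : ℕ → Bool} {j : ℕ → Bool} {g : ℕ → ℕ}
    (hj : TuringLE j w) (hg : Nat.Partrec (g : ℕ →. ℕ))
    (hx : ∀ n, x n = j (g n)) : TuringLE x w := by
  have hcomp : OracleRecursiveIn (toNatFun w)
      (fun n => ((g : ℕ →. ℕ) n) >>= (toNatFun j : ℕ →. ℕ)) :=
    OracleRecursiveIn.comp hj (recursiveIn_of_partrec hg _)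
  refine hcomp.of_eq fun n => ?_
  rw [PFun.coe_val]
  simp only [Part.bind_eq_bind, Part.bind_some, PFun.coe_val, toNatFun, hx n]
  exact Part.bind_some _ _

theorem TuringLE.joinB_left {x y w : ℕ → Bool} (h : TuringLE (joinB x y) w) :
    TuringLE x w :=
  turingLE_of_comp h (Nat.Partrec.of_primrec (Primrec.nat_iff.mp Primrec.nat_double))
    (fun n => (joinB_even x y n).symm)

theorem TuringLE.joinB_right {x y w : ℕ → Bool} (h : TuringLE (joinB x y) w) :
    TuringLE y w :=
  turingLE_of_comp h (Nat.Partrec.of_primrec (Primrec.nat_iff.mp Primrec.nat_double_succ))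
    (fun n => (joinB_odd x y n).symm)


open CodeO

theorem measurable_toNatFun : Measurable toNatFun := by
  apply measurable_pi_lambda
  intro n
  have h1 : Measurable fun x : ℕ → Bool => x n := measurable_pi_apply n
  exact (Measurable.of_discrete (f := fun b : Bool => (cond b 1 0 : ℕ))).comp h1

/-- The middle-point relation used to build the graph. -/
def WRel {X : Type*} (C : X → X → (ℕ → Bool) → Prop) (f : X → ℕ → Bool)
    (ι : X → ℕ → Bool) (x y : X) : Prop :=
  ∃ (u : X) (z1 z2 : ℕ → Bool), C x u z1 ∧ C u y z2 ∧
    TuringLE z1 (f y) ∧ TuringLE z2 (f y) ∧ TuringLE (ι u) (f y)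

theorem wrel_iff {X : Type*} {C : X → X → (ℕ → Bool) → Prop} {f : X → ℕ → Bool}
    {ι : X → ℕ → Bool} {g : (ℕ → Bool) → X} (hgι : ∀ u, g (ι u) = u) (x y : X) :
    WRel C f ι x y ↔ ∃ c1 c2 c3 : CodeO,
      Tot c1 (toNatFun (f y)) ∧ Tot c2 (toNatFun (f y)) ∧ Tot c3 (toNatFun (f y)) ∧
      zOf c3 (toNatFun (f y)) ∈ Set.range ι ∧
      C x (g (zOf c3 (toNatFun (f y)))) (zOf c1 (toNatFun (f y))) ∧
      C (g (zOf c3 (toNatFun (f y)))) y (zOf c2 (toNatFun (f y))) := by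
  set w := toNatFun (f y) with hw
  constructor
  · rintro ⟨u, z1, z2, h1, h2, hz1, hz2, hu⟩
    obtain ⟨c1, hc1⟩ := turingLE_iff.mp hz1
    obtain ⟨c2, hc2⟩ := turingLE_iff.mp hz2
    obtain ⟨c3, hc3⟩ := turingLE_iff.mp hu
    refine ⟨c1, c2, c3, tot_of_eq hc1, tot_of_eq hc2, tot_of_eq hc3, ?_, ?_, ?_⟩
    · rw [zOf_spec hc3]; exact ⟨u, rfl⟩
    · rw [zOf_spec hc3, zOf_spec hc1, hgι]; exact h1
    · rw [zOf_spec hc3, zOf_spec hc2, hgι]; exact h2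
  · rintro ⟨c1, c2, c3, t1, t2, t3, ⟨u0, hu0⟩, h1, h2⟩
    have hgz : g (zOf c3 w) = u0 := by rw [← hu0, hgι]
    refine ⟨g (zOf c3 w), zOf c1 w, zOf c2 w, h1, h2,
      turingLE_iff.mpr ⟨c1, eq_of_tot t1⟩, turingLE_iff.mpr ⟨c2, eq_of_tot t2⟩,
      turingLE_iff.mpr ⟨c3, ?_⟩⟩
    rw [hgz, hu0]
    exact eq_of_tot t3

theorem measurableSet_wrel {X : Type*} [MeasurableSpace X]
    {C : X → X → (ℕ → Bool) → Prop}
    (hCmeas : MeasurableSet {p : (X × X) × (ℕ → Bool) | C p.1.1 p.1.2 p.2})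
    {f : X → ℕ → Bool} (hf : Measurable f)
    {ι : X → ℕ → Bool} (hι : MeasurableEmbedding ι)
    {g : (ℕ → Bool) → X} (hg : Measurable g) (hgι : ∀ u, g (ι u) = u) :
    MeasurableSet {p : X × X | WRel C f ι p.1 p.2} := by
  have hw : Measurable fun p : X × X => toNatFun (f p.2) :=
    measurable_toNatFun.comp (hf.comp measurable_snd)
  have hzc : ∀ c : CodeO, Measurable fun p : X × X => zOf c (toNatFun (f p.2)) :=
    fun c => (measurable_zOf c).comp hw
  have : {p : X × X | WRel C f ι p.1 p.2} =
      ⋃ c1 : CodeO, ⋃ c2 : CodeO, ⋃ c3 : CodeO,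
        ((fun p : X × X => toNatFun (f p.2)) ⁻¹' {w | Tot c1 w}) ∩
        ((fun p : X × X => toNatFun (f p.2)) ⁻¹' {w | Tot c2 w}) ∩
        ((fun p : X × X => toNatFun (f p.2)) ⁻¹' {w | Tot c3 w}) ∩
        ((fun p : X × X => zOf c3 (toNatFun (f p.2))) ⁻¹' Set.range ι) ∩
        ((fun p : X × X => ((p.1, g (zOf c3 (toNatFun (f p.2)))),
            zOf c1 (toNatFun (f p.2)))) ⁻¹'
          {q : (X × X) × (ℕ → Bool) | C q.1.1 q.1.2 q.2}) ∩
        ((fun p : X × X => ((g (zOf c3 (toNatFun (f p.2))), p.2),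
            zOf c2 (toNatFun (f p.2)))) ⁻¹'
          {q : (X × X) × (ℕ → Bool) | C q.1.1 q.1.2 q.2}) := by
    ext p
    simp only [Set.mem_setOf_eq, Set.mem_iUnion, Set.mem_inter_iff, Set.mem_preimage]
    rw [wrel_iff hgι]
    constructor
    · rintro ⟨c1, c2, c3, t1, t2, t3, hr, h1, h2⟩
      exact ⟨c1, c2, c3, ⟨⟨⟨⟨⟨t1, t2⟩, t3⟩, hr⟩, h1⟩, h2⟩⟩
    · rintro ⟨c1, c2, c3, ⟨⟨⟨⟨⟨t1, t2⟩, t3⟩, hr⟩, h1⟩, h2⟩⟩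
      exact ⟨c1, c2, c3, t1, t2, t3, hr, h1, h2⟩
  rw [this]
  refine .iUnion fun c1 => .iUnion fun c2 => .iUnion fun c3 => ?_
  refine ((((((hw (measurableSet_tot c1)).inter (hw (measurableSet_tot c2))).inter
    (hw (measurableSet_tot c3))).inter ((hzc c3) hι.measurableSet_range)).inter
    ?_).inter ?_)
  · exact ((measurable_fst.prodMk (hg.comp (hzc c3))).prodMk (hzc c1)) hCmeas
  · exact (((hg.comp (hzc c3)).prodMk measurable_snd).prodMk (hzc c2)) hCmeas


theorem exists_embedding_retraction (X : Type*) [TopologicalSpace X] [PolishSpace X]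
    [MeasurableSpace X] [BorelSpace X] [Nonempty X] :
    ∃ (ι : X → ℕ → Bool) (g : (ℕ → Bool) → X),
      MeasurableEmbedding ι ∧ Measurable g ∧ ∀ u, g (ι u) = u := by
  classical
  obtain ⟨r, hr⟩ := exists_measurableEmbedding_real X
  have hℝ : ¬Countable ℝ := not_countable
  let e : ℝ ≃ᵐ (ℕ → Bool) := PolishSpace.measurableEquivNatBoolOfNotCountable hℝ
  set ι : X → ℕ → Bool := fun x => e (r x) with hιdef
  have hι : MeasurableEmbedding ι := e.measurableEmbedding.comp hr
  inhabit X
  refine ⟨ι, fun z => if h : ∃ u, ι u = z then h.choose else default, hι, ?_, ?_⟩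
  · intro A hA
    have key : (fun z => if h : ∃ u, ι u = z then h.choose else default) ⁻¹' A =
        (ι '' A) ∪ ({z : ℕ → Bool | (default : X) ∈ A} \ Set.range ι) := by
      ext z
      by_cases hz : ∃ u, ι u = z
      · obtain ⟨u, rfl⟩ := hz
        have h : ∃ u', ι u' = ι u := ⟨u, rfl⟩
        have hch : h.choose = u := hι.injective h.choose_spec
        simp only [Set.mem_preimage, dif_pos h, hch, Set.mem_union, Set.mem_diff,
          Set.mem_setOf_eq]
        constructor
        · intro hu; exact Or.inl ⟨u, hu, rfl⟩
        · rintro (⟨u', hu', hequ⟩ | ⟨_, hnr⟩)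
          · rwa [← hι.injective hequ]
          · exact absurd ⟨u, rfl⟩ hnr
      · simp only [Set.mem_preimage, dif_neg hz, Set.mem_union, Set.mem_diff,
          Set.mem_setOf_eq]
        constructor
        · intro hd; exact Or.inr ⟨hd, fun ⟨u, hu⟩ => hz ⟨u, hu⟩⟩
        · rintro (⟨u, hu, hequ⟩ | ⟨hd, _⟩)
          · exact absurd ⟨u, hequ⟩ hz
          · exact hd
    rw [key]
    exact (hι.measurableSet_image.2 hA).union
      ((MeasurableSet.const _).diff hι.measurableSet_range)
  · intro u
    have h : ∃ u', ι u' = ι u := ⟨u, rfl⟩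
    simp only [dif_pos h]
    exact hι.injective h.choose_spec


/-- If an analytic equivalence relation has the Borel witness coding property, then it is
Borel graphable by a Borel graph of diameter `2`. -/
theorem stmt4 {X : Type*} [TopologicalSpace X] [PolishSpace X]
    [MeasurableSpace X] [BorelSpace X]
    (E : X → X → Prop) (hE : Equivalence E)
    (hA : AnalyticSet {p : X × X | E p.1 p.2})
    (hwc : BorelWitnessCoding E) :
    ∃ G : X → X → Prop, MeasurableSet {p : X × X | G p.1 p.2} ∧
      Symmetric G ∧ Irreflexive G ∧
      (∀ x y, E x y ↔ Relation.ReflTransGen G x y) ∧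
      (∀ x y, E x y → x ≠ y → (G x y ∨ ∃ z, G x z ∧ G z y)) := by
  classical
  obtain ⟨C, ⟨hCmeas, hCrefl, hCsymm, hCproj⟩, f, hf, hcode⟩ := hwc
  by_cases hX : Nonempty X
  · obtain ⟨ι, g, hι, hg, hgι⟩ := exists_embedding_retraction X
    set W := WRel C f ι with hWdef
    have hWE : ∀ x y, W x y → E x y := by
      rintro x y ⟨u, z1, z2, h1, h2, -, -, -⟩
      exact hE.trans ((hCproj x u).2 ⟨z1, h1⟩) ((hCproj u y).2 ⟨z2, h2⟩)
    have hGE : ∀ x y, (x ≠ y ∧ (W x y ∨ W y x)) → E x y := by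
      rintro x y ⟨-, h | h⟩
      exacts [hWE x y h, hE.symm (hWE y x h)]
    have hdiam : ∀ x y, E x y → x ≠ y → (x ≠ y ∧ (W x y ∨ W y x)) ∨
        ∃ z, (x ≠ z ∧ (W x z ∨ W z x)) ∧ (z ≠ y ∧ (W z y ∨ W y z)) := by
      intro x y hxy hne
      obtain ⟨z0, hz0⟩ := (hCproj x y).1 hxy
      obtain ⟨y', hEy', hay', z1, hz1, hz1le⟩ := hcode x (joinB (ι x) z0)
      have hιx : TuringLE (ι x) (f y') := hay'.joinB_left
      have hz0le : TuringLE z0 (f y') := hay'.joinB_right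
      by_cases h1 : y' = y
      · subst h1
        exact Or.inl ⟨hne, Or.inl ⟨x, z1, z1, hCrefl x z1, hz1, hz1le, hz1le, hιx⟩⟩
      · by_cases h2 : y' = x
        · rw [h2] at hιx hz0le
          exact Or.inl ⟨hne, Or.inr
            ⟨x, z0, z0, (hCsymm x y z0).1 hz0, hCrefl x z0, hz0le, hz0le, hιx⟩⟩
        · refine Or.inr ⟨y', ⟨fun h => h2 h.symm,
            Or.inl ⟨x, z1, z1, hCrefl x z1, hz1, hz1le, hz1le, hιx⟩⟩, ⟨h1, Or.inr ?_⟩⟩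
          exact ⟨x, z0, z1, (hCsymm x y z0).1 hz0, hz1, hz0le, hz1le, hιx⟩
    have hconn : ∀ x y, E x y ↔
        Relation.ReflTransGen (fun x y => x ≠ y ∧ (W x y ∨ W y x)) x y := by
      intro x y
      constructor
      · intro hxy
        by_cases hne : x = y
        · subst hne; exact .refl
        · rcases hdiam x y hxy hne with h | ⟨z, hxz, hzy⟩
          · exact .single h
          · have hstep : Relation.ReflTransGen
                (fun x y => x ≠ y ∧ (W x y ∨ W y x)) x z := .single hxz
            exact hstep.tail hzy
      · intro h
        induction h with
        | refl => exact hE.refl x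
        | tail _ hstep ih => exact hE.trans ih (hGE _ _ hstep)
    have hWmeas : MeasurableSet {p : X × X | W p.1 p.2} :=
      measurableSet_wrel hCmeas hf hι hg hgι
    have hswap : MeasurableSet {p : X × X | W p.2 p.1} := by
      have : {p : X × X | W p.2 p.1} = Prod.swap ⁻¹' {p : X × X | W p.1 p.2} := rfl
      rw [this]
      exact measurable_swap hWmeas
    have hdiag : MeasurableSet {p : X × X | p.1 = p.2} :=
      isClosed_diagonal.measurableSet
    have hmeas : MeasurableSet {p : X × X | p.1 ≠ p.2 ∧ (W p.1 p.2 ∨ W p.2 p.1)} := by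
      have : {p : X × X | p.1 ≠ p.2 ∧ (W p.1 p.2 ∨ W p.2 p.1)} =
          {p : X × X | p.1 = p.2}ᶜ ∩ ({p : X × X | W p.1 p.2} ∪ {p : X × X | W p.2 p.1}) := by
        ext p; simp [and_comm]
      rw [this]
      exact hdiag.compl.inter (hWmeas.union hswap)
    refine ⟨fun x y => x ≠ y ∧ (W x y ∨ W y x), hmeas, ?_, ?_, hconn, ?_⟩
    · rintro x y ⟨hne, h⟩
      exact ⟨hne.symm, h.symm⟩
    · exact fun x h => h.1 rfl
    · exact fun x y hxy hne => hdiam x y hxy hne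
  · refine ⟨fun _ _ => False, ?_, fun x => (hX ⟨x⟩).elim, fun x => (hX ⟨x⟩).elim,
      fun x => (hX ⟨x⟩).elim, fun x => (hX ⟨x⟩).elim⟩
    have : {p : X × X | False} = (∅ : Set (X × X)) := Set.setOf_false
    rw [this]
    exact MeasurableSet.empty
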